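/- Let ε and r be real numbers with 0 < ε < 1/2 and r > 1/ε, and for s ∈ (0, r) set λ(s) := √(2·(r/s − 1)). Then ∫_{εr}^{r−1} (1/(λ(s)·s))·exp( −λ(s)²·s/2 − s ) ds ≤ (π/√2)·exp(−r). -/

import Mathlib

open Real MeasureTheory

/-- Analytic core of Lemma 5.1(i): with λ(s) = √(2(r/s − 1)),
    ∫_{εr}^{r−1} (1/(λ(s) s)) exp(−λ(s)² s/2 − s) ds ≤ (π/√2) e^{−r}. -/
theorem integral_lambda_bound (ε r : ℝ) (hε0 : 0 < ε) (hε : ε < 1 / 2) (hr : 1 / ε < r) :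
    ∫ s in (ε * r)..(r - 1),
        (1 / (Real.sqrt (2 * (r / s - 1)) * s)) *
          Real.exp (-(Real.sqrt (2 * (r / s - 1))) ^ 2 * s / 2 - s)
      ≤ Real.pi / Real.sqrt 2 * Real.exp (-r) := by
  have h2ε : (2:ℝ) < 1/ε := by rw [lt_div_iff₀ hε0]; nlinarith
  have hr2 : (2:ℝ) < r := lt_trans h2ε hr
  have hr0 : (0:ℝ) < r := by linarith
  have ha0 : 0 < ε * r := mul_pos hε0 hr0
  have hab : ε * r < r - 1 := by nlinarith
  have hbr : r - 1 < r := by linarith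
  have hicc : Set.uIcc (ε*r) (r-1) = Set.Icc (ε*r) (r-1) := Set.uIcc_of_le hab.le
  set g : ℝ → ℝ := fun s => 1 / Real.sqrt (s * (r - s)) with hg
  have hpos : ∀ s ∈ Set.Icc (ε*r) (r-1), 0 < s ∧ s < r := fun s hs =>
    ⟨lt_of_lt_of_le ha0 hs.1, lt_of_le_of_lt hs.2 hbr⟩
  -- pointwise identity of the integrand
  have hcong : Set.EqOn
      (fun s => (1 / (Real.sqrt (2 * (r / s - 1)) * s)) *
        Real.exp (-(Real.sqrt (2 * (r / s - 1))) ^ 2 * s / 2 - s))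
      (fun s => Real.exp (-r) * ((Real.sqrt 2)⁻¹ * g s))
      (Set.uIcc (ε*r) (r-1)) := by
    intro s hs
    rw [hicc] at hs
    obtain ⟨hs0, hsr⟩ := hpos s hs
    have hq : 0 ≤ 2 * (r / s - 1) := by
      have : 1 ≤ r / s := (one_le_div hs0).2 hsr.le
      linarith
    have hsq : (Real.sqrt (2 * (r / s - 1))) ^ 2 = 2 * (r / s - 1) := Real.sq_sqrt hq
    have hexp : -(Real.sqrt (2 * (r / s - 1))) ^ 2 * s / 2 - s = -r := by
      rw [hsq]; field_simp; ring
    have hX : 0 < s * (r - s) := by nlinarith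
    have hsqX : (0:ℝ) < Real.sqrt (s * (r - s)) := Real.sqrt_pos.2 hX
    have hden : Real.sqrt (2 * (r / s - 1)) * s
        = Real.sqrt 2 * Real.sqrt (s * (r - s)) := by
      have h1 : (2 * (r / s - 1)) * s^2 = 2 * (s * (r - s)) := by
        field_simp
      calc Real.sqrt (2 * (r / s - 1)) * s
          = Real.sqrt (2 * (r / s - 1)) * Real.sqrt (s^2) := by
            rw [Real.sqrt_sq hs0.le]
        _ = Real.sqrt ((2 * (r / s - 1)) * s^2) := (Real.sqrt_mul hq _).symm
        _ = Real.sqrt (2 * (s * (r - s))) := by rw [h1]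
        _ = Real.sqrt 2 * Real.sqrt (s * (r - s)) := Real.sqrt_mul (by norm_num) _
    simp only [hexp, hden, hg]
    have h2 : (0:ℝ) < Real.sqrt 2 := Real.sqrt_pos.2 (by norm_num)
    field_simp
  rw [intervalIntegral.integral_congr hcong]
  simp only [intervalIntegral.integral_const_mul]
  -- FTC for g with antiderivative arcsin(2s/r - 1)
  have hder : ∀ s ∈ Set.uIcc (ε*r) (r-1),
      HasDerivAt (fun s => Real.arcsin (2*s/r - 1)) (g s) s := by
    intro s hs
    rw [hicc] at hs
    obtain ⟨hs0, hsr⟩ := hpos s hs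
    have h1 : HasDerivAt (fun s : ℝ => 2*s/r - 1) (2/r) s := by
      simpa using (((hasDerivAt_id s).const_mul 2).div_const r).sub_const 1
    have hlt : 2*s/r - 1 < 1 := by
      rw [div_sub' hr0.ne', div_lt_one hr0]; linarith
    have hgt : (-1:ℝ) < 2*s/r - 1 := by
      rw [div_sub' hr0.ne', lt_div_iff₀ hr0]; linarith
    have harc := (Real.hasDerivAt_arcsin hgt.ne' hlt.ne).comp s h1
    have hX : 0 < s * (r - s) := by nlinarith
    have hsqX : (0:ℝ) < Real.sqrt (s * (r - s)) := Real.sqrt_pos.2 hX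
    have key : 1 - (2*s/r - 1)^2 = (2/r)^2 * (s*(r-s)) := by
      field_simp; ring
    have hsq : Real.sqrt (1 - (2*s/r - 1)^2) = (2/r) * Real.sqrt (s*(r-s)) := by
      rw [key, Real.sqrt_mul (sq_nonneg _), Real.sqrt_sq (by positivity : (0:ℝ) ≤ 2/r)]
    have heq : (1 / Real.sqrt (1 - (2*s/r - 1)^2)) * (2/r) = g s := by
      have p1 : (0:ℝ) < Real.sqrt s := Real.sqrt_pos.2 hs0
      have p2 : (0:ℝ) < Real.sqrt (r - s) := Real.sqrt_pos.2 (by linarith)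
      rw [hsq, hg]
      field_simp
    rw [← heq]
    exact harc
  have hgint : IntervalIntegrable g volume (ε*r) (r-1) := by
    apply ContinuousOn.intervalIntegrable
    apply ContinuousOn.div continuousOn_const
    · exact (Real.continuous_sqrt.comp (by continuity)).continuousOn
    · intro s hs
      rw [hicc] at hs
      obtain ⟨hs0, hsr⟩ := hpos s hs
      exact (Real.sqrt_pos.2 (by nlinarith)).ne'
  rw [intervalIntegral.integral_eq_sub_of_hasDerivAt hder hgint]
  have hbound : Real.arcsin (2*(r-1)/r - 1) - Real.arcsin (2*(ε*r)/r - 1) ≤ Real.pi := by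
    have h1 := Real.arcsin_le_pi_div_two (2*(r-1)/r - 1)
    have h2 := Real.neg_pi_div_two_le_arcsin (2*(ε*r)/r - 1)
    linarith
  have h2 : (0:ℝ) < Real.sqrt 2 := Real.sqrt_pos.2 (by norm_num)
  have hE : (0:ℝ) < Real.exp (-r) := Real.exp_pos _
  calc Real.exp (-r) * ((Real.sqrt 2)⁻¹ *
        (Real.arcsin (2*(r-1)/r - 1) - Real.arcsin (2*(ε*r)/r - 1)))
      ≤ Real.exp (-r) * ((Real.sqrt 2)⁻¹ * Real.pi) := by
        apply mul_le_mul_of_nonneg_left _ hE.le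
        exact mul_le_mul_of_nonneg_left hbound (by positivity)
    _ = Real.pi / Real.sqrt 2 * Real.exp (-r) := by
        rw [div_eq_mul_inv]; ring
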